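/- Let n ≥ 1 and D_1 ≥ 2 be integers, let Q(ζ), S_{ij}, G̃₂(ζ), Θ and κ_1,…,κ_{2n} satisfy all the hypotheses and notation above, with Θ moreover of class C^{κ} up to the boundary of the closed unit disc, where κ = max_j κ_j. If H: {|ζ| ≤ 1} → ℂ^{2n} is of class C^{κ} on the closed unit disc, holomorphic on the open unit disc, satisfies conj(G̃₂(ζ)) · H(ζ) + G̃₂(ζ) · conj(H(ζ)) = 0 for every |ζ| = 1, and has vanishing jet of order κ at ζ = 1 (i.e., H(1) = H'(1) = ⋯ = H^{(κ)}(1) = 0), then H is identically zero. -/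

import Mathlib

open Metric

lemma tangentCone_real_subset {s : Set ℂ} {x : ℂ} :
    tangentConeAt ℝ s x ⊆ tangentConeAt ℂ s x := by
  exact tangentConeAt_mono_field

lemma myUDiff : UniqueDiffOn ℂ (Metric.closedBall (0:ℂ) 1) := by
  intro x hx
  have hR : UniqueDiffWithinAt ℝ (Metric.closedBall (0:ℂ) 1) x :=
    uniqueDiffOn_convex (convex_closedBall _ _)
      (by rw [interior_closedBall (0:ℂ) one_ne_zero]; exact ⟨0, by simp⟩) x hx
  rw [uniqueDiffWithinAt_iff] at hR ⊢
  refine ⟨hR.1.mono ?_, hR.2⟩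
  have hle : Submodule.span ℝ (tangentConeAt ℝ (Metric.closedBall (0:ℂ) 1) x) ≤
      (Submodule.span ℂ (tangentConeAt ℂ (Metric.closedBall (0:ℂ) 1) x)).restrictScalars ℝ :=
    Submodule.span_le.mpr (tangentCone_real_subset.trans Submodule.subset_span)
  exact hle

lemma my_one_mem : (1:ℂ) ∈ Metric.closedBall (0:ℂ) 1 := by
  simp [Metric.mem_closedBall, dist_eq_norm]

lemma jet_littleo : ∀ (m : ℕ) (u : ℂ → ℂ),
    ContDiffOn ℂ m u (Metric.closedBall 0 1) →
    (∀ j ≤ m, iteratedDerivWithin j u (Metric.closedBall 0 1) 1 = 0) →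
    ∀ ε > (0:ℝ), ∃ δ > (0:ℝ), ∀ ζ ∈ Metric.closedBall (0:ℂ) 1,
      ‖ζ - 1‖ < δ → ‖u ζ‖ ≤ ε * ‖ζ - 1‖ ^ m := by
  intro m
  induction m with
  | zero =>
    intro u hu hjet ε hε
    have h1 : u 1 = 0 := by simpa using hjet 0 le_rfl
    have hc : ContinuousWithinAt u (Metric.closedBall 0 1) 1 :=
      (hu.continuousOn) 1 my_one_mem
    rw [Metric.continuousWithinAt_iff] at hc
    obtain ⟨δ, hδ, hd⟩ := hc ε hε
    refine ⟨δ, hδ, fun ζ hζ hlt => ?_⟩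
    have := hd hζ (by simpa [dist_eq_norm] using hlt)
    rw [h1, dist_zero_right] at this
    simpa using this.le
  | succ m IH =>
    intro u hu hjet ε hε
    set s := Metric.closedBall (0:ℂ) 1 with hs
    have hv : ContDiffOn ℂ m (derivWithin u s) s := by
      apply hu.derivWithin myUDiff
      exact_mod_cast le_rfl
    have hvjet : ∀ j ≤ m, iteratedDerivWithin j (derivWithin u s) s 1 = 0 := by
      intro j hj
      have := hjet (j+1) (Nat.succ_le_succ hj)
      rwa [iteratedDerivWithin_succ'] at this
    obtain ⟨δ, hδ, hd⟩ := IH (derivWithin u s) hv hvjet ε hε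
    refine ⟨δ, hδ, fun ζ hζ hlt => ?_⟩
    set t := s ∩ Metric.closedBall (1:ℂ) ‖ζ - 1‖ with ht
    have htconv : Convex ℝ t := (convex_closedBall _ _).inter (convex_closedBall _ _)
    have h1t : (1:ℂ) ∈ t := ⟨my_one_mem, by simp [Metric.mem_closedBall, dist_eq_norm]⟩
    have hζt : ζ ∈ t := ⟨hζ, by simp [Metric.mem_closedBall, dist_eq_norm]⟩
    have hdiff : DifferentiableOn ℂ u s := hu.differentiableOn (by simp)
    have hder : ∀ x ∈ t, HasDerivWithinAt u (derivWithin u s x) t x := fun x hx =>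
      ((hdiff x hx.1).hasDerivWithinAt).mono Set.inter_subset_left
    have hbound : ∀ x ∈ t, ‖derivWithin u s x‖ ≤ ε * ‖ζ - 1‖ ^ m := by
      intro x hx
      have hx1 : ‖x - 1‖ ≤ ‖ζ - 1‖ := by
        have := hx.2; rwa [Metric.mem_closedBall, dist_eq_norm] at this
      calc ‖derivWithin u s x‖ ≤ ε * ‖x - 1‖ ^ m := hd x hx.1 (lt_of_le_of_lt hx1 hlt)
        _ ≤ ε * ‖ζ - 1‖ ^ m := by
            exact mul_le_mul_of_nonneg_left (pow_le_pow_left₀ (norm_nonneg _) hx1 m) hε.le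
    have := htconv.norm_image_sub_le_of_norm_hasDerivWithin_le hder hbound h1t hζt
    have h1 : u 1 = 0 := by simpa using hjet 0 (Nat.zero_le _)
    rw [h1, sub_zero] at this
    calc ‖u ζ‖ ≤ ε * ‖ζ - 1‖ ^ m * ‖ζ - 1‖ := this
      _ = ε * ‖ζ - 1‖ ^ (m+1) := by ring

lemma max_mod_exp (u : ℂ → ℂ) (hc : ContinuousOn u (Metric.closedBall 0 1))
    (hd : DifferentiableOn ℂ u (Metric.ball 0 1))
    (hb : ∀ z : ℂ, ‖z‖ = 1 → (u z).im = 0) (c : ℂ) (hcre : c.re = 0) :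
    ∀ z ∈ Metric.closedBall (0:ℂ) 1, ‖Complex.exp (c * u z)‖ ≤ 1 := by
  intro z hz
  have hdc : DiffContOnCl ℂ (fun w => Complex.exp (c * u w)) (Metric.ball 0 1) := by
    refine ⟨((hd.const_mul c).cexp), ?_⟩
    rw [closure_ball (0:ℂ) one_ne_zero]
    exact ((hc.const_smul c).congr (by intro x _; simp [smul_eq_mul])).cexp
  refine Complex.norm_le_of_forall_mem_frontier_norm_le Metric.isBounded_ball hdc ?_ ?_
  · intro w hw
    rw [frontier_ball (0:ℂ) one_ne_zero, mem_sphere_zero_iff_norm] at hw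
    have him := hb w hw
    rw [Complex.norm_exp]
    have : (c * u w).re = 0 := by
      rw [Complex.mul_re, him, hcre]; ring
    rw [this, Real.exp_zero]
  · rwa [closure_ball (0:ℂ) one_ne_zero]

lemma im_zero_on_closedBall (u : ℂ → ℂ) (hc : ContinuousOn u (Metric.closedBall 0 1))
    (hd : DifferentiableOn ℂ u (Metric.ball 0 1))
    (hb : ∀ z : ℂ, ‖z‖ = 1 → (u z).im = 0) :
    ∀ z ∈ Metric.closedBall (0:ℂ) 1, (u z).im = 0 := by
  intro z hz
  have h1 := max_mod_exp u hc hd hb Complex.I (by simp) z hz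
  have h2 := max_mod_exp u hc hd hb (-Complex.I) (by simp) z hz
  rw [Complex.norm_exp] at h1 h2
  have e1 : (Complex.I * u z).re = -(u z).im := by simp [Complex.mul_re]
  have e2 : (-Complex.I * u z).re = (u z).im := by simp [Complex.mul_re]
  rw [e1] at h1; rw [e2] at h2
  have := Real.exp_le_exp.mp (by simpa [Real.exp_zero] using h1)
  have := Real.exp_le_exp.mp (by simpa [Real.exp_zero] using h2)
  linarith [Real.exp_le_exp.mp (by simpa [Real.exp_zero] using h1 : Real.exp (-(u z).im) ≤ Real.exp 0),
    Real.exp_le_exp.mp (by simpa [Real.exp_zero] using h2 : Real.exp ((u z).im) ≤ Real.exp 0)]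

lemma deriv_eq_zero_of_real (u : ℂ → ℂ) (hd : DifferentiableOn ℂ u (Metric.ball 0 1))
    (him : ∀ z ∈ Metric.ball (0:ℂ) 1, (u z).im = 0) :
    ∀ z ∈ Metric.ball (0:ℂ) 1, deriv u z = 0 := by
  intro z hz
  have hopen : Metric.ball (0:ℂ) 1 ∈ nhds z := isOpen_ball.mem_nhds hz
  have hda : DifferentiableAt ℂ u z := (hd.differentiableAt hopen)
  have hder := hda.hasDerivAt
  set d := deriv u z with hdd
  -- small radius so that z + w stays in the ball
  obtain ⟨r, hr, hball⟩ := Metric.mem_nhds_iff.mp hopen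
  -- direction along the reals
  have key : ∀ c : ℂ, c ≠ 0 → ((fun t : ℝ => ((t:ℂ) * c)) ⁻¹' Metric.ball 0 r ∈ nhds (0:ℝ)) →
      True := fun _ _ _ => trivial
  have dir : ∀ c : ℂ, HasDerivAt (fun t : ℝ => u (z + (t:ℂ) * c)) (d * c) 0 := by
    intro c
    have hinner : HasDerivAt (fun w : ℂ => z + w * c) c 0 := by
      simpa using ((hasDerivAt_id (0:ℂ)).mul_const c).const_add z
    have hder' : HasDerivAt u d (z + 0 * c) := by simpa using hder
    have : HasDerivAt (fun w : ℂ => u (z + w * c)) (d * c) 0 := by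
      exact (hder'.comp (0:ℂ) hinner)
    exact this.comp_ofReal
  have imzero : ∀ c : ℂ, c ≠ 0 → (∀ t : ℝ, ((t:ℂ) * c) ∈ Metric.ball (0:ℂ) r → (u (z + (t:ℂ)*c)).im = 0) → (d * c).im = 0 := by
    intro c hc hmem
    have hslope := hasDerivAt_iff_tendsto_slope.mp (dir c)
    have hev : ∀ᶠ t : ℝ in nhdsWithin 0 {(0:ℝ)}ᶜ, (slope (fun t : ℝ => u (z + (t:ℂ) * c)) 0 t).im = 0 := by
      have hsmall : ∀ᶠ t : ℝ in nhdsWithin 0 {(0:ℝ)}ᶜ, ((t:ℂ) * c) ∈ Metric.ball (0:ℂ) r := by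
        apply Filter.eventually_iff_exists_mem.mpr
        have hcont : Continuous (fun t : ℝ => (t:ℂ) * c) := by continuity
        have : (fun t : ℝ => (t:ℂ) * c) ⁻¹' Metric.ball 0 r ∈ nhds (0:ℝ) :=
          hcont.continuousAt.preimage_mem_nhds (by simpa using Metric.ball_mem_nhds (0:ℂ) hr)
        exact ⟨_, nhdsWithin_le_nhds this, fun t ht => ht⟩
      filter_upwards [hsmall, self_mem_nhdsWithin] with t ht ht0
      have h1 : (u (z + (t:ℂ)*c)).im = 0 := hmem t ht
      have h0 : (u (z + (0:ℝ)*c)).im = 0 := by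
        have : z ∈ Metric.ball (0:ℂ) 1 := hz
        simpa using him z this
      rw [slope_def_module, Complex.smul_im, Complex.sub_im, h1, h0]
      simp
    have him_d : Filter.Tendsto (fun t : ℝ => (slope (fun t : ℝ => u (z + (t:ℂ) * c)) 0 t).im) (nhdsWithin 0 {(0:ℝ)}ᶜ) (nhds (d*c).im) :=
      (Complex.continuous_im.continuousAt.tendsto.comp hslope)
    have : Filter.Tendsto (fun _ : ℝ => (0:ℝ)) (nhdsWithin 0 {(0:ℝ)}ᶜ) (nhds (d*c).im) :=
      him_d.congr' (by filter_upwards [hev] with t ht using ht)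
    exact tendsto_nhds_unique this tendsto_const_nhds
  have mem1 : ∀ t : ℝ, ((t:ℂ) * 1) ∈ Metric.ball (0:ℂ) r → (u (z + (t:ℂ)*1)).im = 0 := by
    intro t ht
    exact him _ (hball (by simpa [Metric.mem_ball, dist_eq_norm] using ht))
  have memI : ∀ t : ℝ, ((t:ℂ) * Complex.I) ∈ Metric.ball (0:ℂ) r → (u (z + (t:ℂ)*Complex.I)).im = 0 := by
    intro t ht
    exact him _ (hball (by simpa [Metric.mem_ball, dist_eq_norm] using ht))
  have h1 := imzero 1 one_ne_zero mem1
  have h2 := imzero Complex.I Complex.I_ne_zero memI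
  rw [mul_one] at h1
  have : d.re = 0 := by simpa [Complex.mul_im] using h2
  exact Complex.ext (by simpa using this) h1

lemma const_on_ball_of_real (u : ℂ → ℂ) (hd : DifferentiableOn ℂ u (Metric.ball 0 1))
    (him : ∀ z ∈ Metric.ball (0:ℂ) 1, (u z).im = 0) :
    ∀ z ∈ Metric.ball (0:ℂ) 1, u z = u 0 := by
  intro z hz
  have h0 : (0:ℂ) ∈ Metric.ball (0:ℂ) 1 := by simp
  have key := (convex_ball (0:ℂ) 1).norm_image_sub_le_of_norm_hasDerivWithin_le
    (f' := deriv u) (C := 0)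
    (fun x hx => ((hd.differentiableAt (isOpen_ball.mem_nhds hx)).hasDerivAt).hasDerivWithinAt)
    (fun x hx => by rw [deriv_eq_zero_of_real u hd him x hx]; simp) h0 hz
  have : ‖u z - u 0‖ ≤ 0 := by simpa using key
  exact sub_eq_zero.mp (norm_le_zero_iff.mp this)

lemma zero_on_closedBall_of_zero_on_ball (g : ℂ → ℂ)
    (hc : ContinuousOn g (Metric.closedBall 0 1))
    (h0 : ∀ ζ ∈ Metric.ball (0:ℂ) 1, g ζ = 0) :
    ∀ ζ ∈ Metric.closedBall (0:ℂ) 1, g ζ = 0 := by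
  intro ζ hζ
  have hcl : ζ ∈ closure (Metric.ball (0:ℂ) 1) := by
    rw [closure_ball (0:ℂ) one_ne_zero]; exact hζ
  have hne : (nhdsWithin ζ (Metric.ball (0:ℂ) 1)).NeBot := mem_closure_iff_nhdsWithin_neBot.mp hcl
  have ht : Filter.Tendsto g (nhdsWithin ζ (Metric.ball (0:ℂ) 1)) (nhds (g ζ)) :=
    ((hc ζ hζ).mono Metric.ball_subset_closedBall)
  have ht0 : Filter.Tendsto g (nhdsWithin ζ (Metric.ball (0:ℂ) 1)) (nhds 0) :=
    Filter.Tendsto.congr' (by filter_upwards [self_mem_nhdsWithin] with x hx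
                              exact (h0 x hx).symm) tendsto_const_nhds
  exact tendsto_nhds_unique ht ht0

open ComplexConjugate in
lemma key_vanish (K : ℕ) (k : ℤ) (hk : k ≤ (K:ℤ)) (g : ℂ → ℂ)
    (hc : ContinuousOn g (Metric.closedBall 0 1))
    (hd : DifferentiableOn ℂ g (Metric.ball 0 1))
    (hg1 : g 1 = 0)
    (hrel : ∀ ζ : ℂ, ‖ζ‖ = 1 → g ζ = ζ ^ k * conj (g ζ))
    (hlo : ∀ ε > (0:ℝ), ∃ δ > (0:ℝ), ∀ ζ ∈ Metric.closedBall (0:ℂ) 1,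
      ‖ζ - 1‖ < δ → ‖g ζ‖ ≤ ε * ‖ζ - 1‖ ^ K) :
    ∀ ζ ∈ Metric.closedBall (0:ℂ) 1, g ζ = 0 := by
  set m : ℕ := ((K:ℤ) - k).toNat with hm
  have hmk : (m : ℤ) = (K:ℤ) - k := Int.toNat_of_nonneg (sub_nonneg.mpr hk)
  set u : ℂ → ℂ := fun ζ => ((-1:ℂ))^K * ζ^m * (g ζ)^2 / (ζ - 1)^(2*K) with hu
  -- u 1 = 0
  have hu1 : u 1 = 0 := by
    rcases Nat.eq_zero_or_pos K with hK0 | hKpos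
    · simp [hu, hK0, hg1]
    · have hz : ((1:ℂ) - 1)^(2*K) = 0 := by
        rw [sub_self]; exact zero_pow (by omega)
      show ((-1:ℂ))^K * 1^m * (g 1)^2 / ((1:ℂ) - 1)^(2*K) = 0
      rw [hz, div_zero]
  -- norm bound for u near 1
  have hubound : ∀ ε₀ > (0:ℝ), ∃ δ > (0:ℝ), ∀ ζ ∈ Metric.closedBall (0:ℂ) 1,
      ‖ζ - 1‖ < δ → ‖u ζ‖ ≤ ε₀^2 := by
    intro ε₀ hε₀
    obtain ⟨δ, hδ, hb⟩ := hlo ε₀ hε₀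
    refine ⟨δ, hδ, fun ζ hζ hlt => ?_⟩
    by_cases hζ1 : ζ = 1
    · rw [hζ1, hu1, norm_zero]; positivity
    · have hζle : ‖ζ‖ ≤ 1 := by rwa [Metric.mem_closedBall, dist_zero_right] at hζ
      have hpos : (0:ℝ) < ‖ζ - 1‖ ^ (2*K) := by
        apply pow_pos
        rw [norm_pos_iff]; exact sub_ne_zero.mpr hζ1
      have hnum : ‖((-1:ℂ))^K * ζ^m * (g ζ)^2‖ ≤ ε₀^2 * ‖ζ - 1‖^(2*K) := by
        rw [norm_mul, norm_mul, norm_pow, norm_pow, norm_pow, norm_neg, norm_one, one_pow, one_mul]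
        calc ‖ζ‖^m * ‖g ζ‖^2 ≤ 1 * (ε₀ * ‖ζ-1‖^K)^2 := by
              apply mul_le_mul (pow_le_one₀ (norm_nonneg _) hζle)
                (pow_le_pow_left₀ (norm_nonneg _) (hb ζ hζ hlt) 2)
                (by positivity) zero_le_one
          _ = ε₀^2 * ‖ζ - 1‖^(2*K) := by rw [mul_pow, ← pow_mul]; ring
      have heq : ‖u ζ‖ = ‖((-1:ℂ))^K * ζ^m * (g ζ)^2‖ / ‖ζ - 1‖^(2*K) := by
        show ‖((-1:ℂ))^K * ζ^m * (g ζ)^2 / (ζ-1)^(2*K)‖ = _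
        rw [norm_div, norm_pow]
      rw [heq, div_le_iff₀ hpos]
      exact hnum
  -- continuity of u on the closed ball
  have hcu : ContinuousOn u (Metric.closedBall 0 1) := by
    intro ζ0 hζ0
    by_cases h1 : ζ0 = 1
    · subst h1
      rw [Metric.continuousWithinAt_iff]
      intro ε hε
      have hε₀ : (0:ℝ) < min 1 (ε/2) := by positivity
      obtain ⟨δ, hδ, hb⟩ := hubound _ hε₀
      refine ⟨δ, hδ, fun {x} hx hdx => ?_⟩
      have hxb := hb x hx (by rwa [dist_eq_norm] at hdx)
      rw [hu1, dist_zero_right]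
      calc ‖u x‖ ≤ (min 1 (ε/2))^2 := hxb
        _ ≤ (min 1 (ε/2)) * 1 := by
            rw [pow_two]
            exact mul_le_mul_of_nonneg_left (min_le_left _ _) hε₀.le
        _ < ε := by
            rw [mul_one]
            exact lt_of_le_of_lt (min_le_right _ _) (by linarith)
    · have hden : (ζ0 - 1)^(2*K) ≠ 0 := by
        rcases Nat.eq_zero_or_pos K with h|h
        · simp [h]
        · exact pow_ne_zero _ (sub_ne_zero.mpr h1)
      apply ContinuousWithinAt.div
      · exact (continuousWithinAt_const.mul ((continuous_pow m).continuousWithinAt)).mul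
          ((hc ζ0 hζ0).pow 2)
      · exact ((continuous_id.sub continuous_const).pow _).continuousWithinAt
      · exact hden
  -- differentiability of u on the open ball
  have hdu : DifferentiableOn ℂ u (Metric.ball 0 1) := by
    apply DifferentiableOn.div
    · exact ((differentiableOn_const _).mul (differentiable_pow m).differentiableOn).mul
        (hd.pow 2)
    · exact ((differentiable_id.sub (differentiable_const _)).pow _).differentiableOn
    · intro ζ hζ
      rcases Nat.eq_zero_or_pos K with h|h
      · simp [h]
      · have hne : ζ ≠ 1 := by
          intro hcon
          rw [hcon] at hζ
          simp [Metric.mem_ball] at hζ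
        exact pow_ne_zero _ (sub_ne_zero.mpr hne)
  -- u is real on the boundary circle
  have hbim : ∀ z : ℂ, ‖z‖ = 1 → (u z).im = 0 := by
    intro z hz
    by_cases h1 : z = 1
    · rw [h1, hu1]; simp
    · have hz0 : z ≠ 0 := by intro h; rw [h] at hz; simp at hz
      have habs : ‖z‖ = 1 := hz
      have hmc : z * conj z = 1 := by
        rw [Complex.mul_conj, Complex.normSq_eq_norm_sq, habs]; norm_num
      have hconj : conj z = z⁻¹ := by
        field_simp
        linear_combination hmc
      have hgsq : g z ^ 2 = z ^ k * ((Complex.normSq (g z) : ℝ) : ℂ) := by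
        calc g z ^2 = (z^k * conj (g z)) * g z := by rw [← hrel z hz]; ring
          _ = z^k * (g z * conj (g z)) := by ring
          _ = z^k * ((Complex.normSq (g z) : ℝ) : ℂ) := by rw [Complex.mul_conj]
      have hzm : (z:ℂ)^m * z^k = z^(K:ℕ) := by
        rw [← zpow_natCast z m, ← zpow_add₀ hz0, hmk, sub_add_cancel, zpow_natCast]
      have hns1 : ((Complex.normSq (z-1) : ℝ) : ℂ) = (z - 1) * (z⁻¹ - 1) := by
        rw [← Complex.mul_conj]
        congr 1
        rw [map_sub, hconj, map_one]
      have hden2 : (z - 1)^2 = -z * ((Complex.normSq (z-1) : ℝ) : ℂ) := by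
        rw [hns1]
        field_simp
        ring
      have hdenK : (z-1)^(2*K) = ((-1:ℂ))^K * z^K * ((Complex.normSq (z-1):ℝ):ℂ)^K := by
        rw [pow_mul, hden2]
        rw [show (-z : ℂ) = (-1) * z from by ring, mul_pow, mul_pow]
      have hzKne : ((-1:ℂ))^K * z^K ≠ 0 := by
        apply mul_ne_zero
        · exact pow_ne_zero _ (by norm_num)
        · exact pow_ne_zero _ hz0
      have hval : u z = ((Complex.normSq (g z) / (Complex.normSq (z-1))^K : ℝ) : ℂ) := by
        show ((-1:ℂ))^K * z^m * (g z)^2 / (z-1)^(2*K) = _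
        rw [hgsq, hdenK]
        have hnum' : ((-1:ℂ))^K * z^m * (z^k * ((Complex.normSq (g z) : ℝ) : ℂ))
            = ((-1:ℂ))^K * z^K * ((Complex.normSq (g z) : ℝ) : ℂ) := by
          calc ((-1:ℂ))^K * z^m * (z^k * ((Complex.normSq (g z) : ℝ) : ℂ))
              = ((-1:ℂ))^K * ((z^m * z^k) * ((Complex.normSq (g z) : ℝ) : ℂ)) := by ring
            _ = ((-1:ℂ))^K * (z^K * ((Complex.normSq (g z) : ℝ) : ℂ)) := by rw [hzm]
            _ = ((-1:ℂ))^K * z^K * ((Complex.normSq (g z) : ℝ) : ℂ) := by ring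
        rw [hnum', mul_div_mul_left _ _ hzKne]
        push_cast
        ring
      rw [hval]
      exact Complex.ofReal_im _
  -- conclude that u is real on the whole closed ball, hence constant, hence zero
  have himcb := im_zero_on_closedBall u hcu hdu hbim
  have hconst := const_on_ball_of_real u hdu
    (fun z hz => himcb z (Metric.ball_subset_closedBall hz))
  have hdiff0 : ∀ ζ ∈ Metric.closedBall (0:ℂ) 1, u ζ - u 0 = 0 :=
    zero_on_closedBall_of_zero_on_ball _ (hcu.sub continuousOn_const)
      (fun z hz => sub_eq_zero.mpr (hconst z hz))
  have hu0 : u 0 = 0 := by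
    have := hdiff0 1 my_one_mem
    rw [hu1, zero_sub, neg_eq_zero] at this
    exact this
  have huball : ∀ z ∈ Metric.ball (0:ℂ) 1, u z = 0 := by
    intro z hz
    rw [hconst z hz, hu0]
  -- deduce g = 0 on the ball minus the origin
  have hgball' : ∀ z ∈ Metric.ball (0:ℂ) 1, z ≠ 0 → g z = 0 := by
    intro z hz hz0
    have hzu := huball z hz
    have hne1 : z ≠ 1 := by
      intro hcon; rw [hcon] at hz; simp [Metric.mem_ball] at hz
    have hden : (z - 1)^(2*K) ≠ 0 := by
      rcases Nat.eq_zero_or_pos K with h|h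
      · simp [h]
      · exact pow_ne_zero _ (sub_ne_zero.mpr hne1)
    have hnum : ((-1:ℂ))^K * z^m * (g z)^2 = 0 := by
      have : ((-1:ℂ))^K * z^m * (g z)^2 / (z-1)^(2*K) = 0 := hzu
      exact (div_eq_zero_iff.mp this).resolve_right hden
    have h2 : (g z)^2 = 0 := by
      have hne : ((-1:ℂ))^K * z^m ≠ 0 :=
        mul_ne_zero (pow_ne_zero _ (by norm_num)) (pow_ne_zero _ hz0)
      rcases mul_eq_zero.mp hnum with h|h
      · exact absurd h hne
      · exact h
    exact pow_eq_zero_iff (by norm_num) |>.mp h2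
  -- extend to the origin by continuity
  have hg0 : g 0 = 0 := by
    have hballmem : Metric.ball (0:ℂ) 1 ∈ nhds (0:ℂ) := Metric.ball_mem_nhds _ one_pos
    have hrestr : nhdsWithin (0:ℂ) {(0:ℂ)}ᶜ = nhdsWithin (0:ℂ) ({(0:ℂ)}ᶜ ∩ Metric.ball 0 1) :=
      nhdsWithin_restrict' _ hballmem
    have hcw : Filter.Tendsto g (nhdsWithin (0:ℂ) ({(0:ℂ)}ᶜ ∩ Metric.ball 0 1)) (nhds (g 0)) := by
      apply ((hc 0 (Metric.ball_subset_closedBall (Metric.mem_ball_self one_pos))).mono ?_)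
      exact fun x hx => Metric.ball_subset_closedBall hx.2
    have hz0' : Filter.Tendsto g (nhdsWithin (0:ℂ) ({(0:ℂ)}ᶜ ∩ Metric.ball 0 1)) (nhds 0) := by
      apply Filter.Tendsto.congr' _ tendsto_const_nhds
      filter_upwards [self_mem_nhdsWithin] with x hx
      exact (hgball' x hx.2 hx.1).symm
    have hnb : (nhdsWithin (0:ℂ) ({(0:ℂ)}ᶜ ∩ Metric.ball 0 1)).NeBot := by
      rw [← hrestr]
      infer_instance
    exact tendsto_nhds_unique hcw hz0'
  have hgball : ∀ z ∈ Metric.ball (0:ℂ) 1, g z = 0 := by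
    intro z hz
    by_cases h : z = 0
    · rw [h]; exact hg0
    · exact hgball' z hz h
  exact zero_on_closedBall_of_zero_on_ball g hc hgball

open ComplexConjugate

noncomputable section

def Gtilde2 (n : ℕ) (Q S : Fin n → Fin n → Polynomial ℂ) (ζ : ℂ) :
    Matrix (Fin n × Fin 2) (Fin n × Fin 2) ℂ :=
  Matrix.of fun p q =>
    if p.2 = 0 then
      (if q.2 = 0 then (if p.1 = q.1 then (1 : ℂ) else 0)
       else (Q p.1 q.1).eval ζ + (S p.1 q.1).eval (conj ζ))
    else
      (if q.2 = 0 then (if p.1 = q.1 then -Complex.I else 0)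
       else Complex.I * ((Q p.1 q.1).eval ζ - (S p.1 q.1).eval (conj ζ)))

theorem stmt14
    (n D1 : ℕ) (hn : 1 ≤ n) (hD1 : 2 ≤ D1)
    (Q S : Fin n → Fin n → Polynomial ℂ)
    (hQdvd : ∀ i j, (Polynomial.X : Polynomial ℂ) ^ (D1 - 1) ∣ Q i j)
    (hQinv : ∀ ζ : ℂ, ‖ζ‖ = 1 → IsUnit (Matrix.of fun i j => (Q i j).eval ζ))
    (κ : Fin n × Fin 2 → ℤ)
    (Θ : ℂ → Matrix (Fin n × Fin 2) (Fin n × Fin 2) ℂ)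
    (hΘcont : ∀ p q, ContinuousOn (fun ζ => Θ ζ p q) (Metric.closedBall 0 1))
    (hΘdiff : ∀ p q, DifferentiableOn ℂ (fun ζ => Θ ζ p q) (Metric.ball 0 1))
    (hΘinv : ∀ ζ ∈ Metric.closedBall (0 : ℂ) 1, IsUnit (Θ ζ))
    (hfact : ∀ ζ : ℂ, ‖ζ‖ = 1 →
      -(Θ ζ * ((Gtilde2 n Q S ζ).map (starRingEnd ℂ))⁻¹ * Gtilde2 n Q S ζ) =
        Matrix.diagonal (fun p => ζ ^ κ p) * (Θ ζ).map (starRingEnd ℂ))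
    (K : ℕ) (hK : IsGreatest (Set.range κ) (K : ℤ))
    (hΘreg : ∀ p q, ContDiffOn ℂ K (fun ζ => Θ ζ p q) (Metric.closedBall 0 1))
    (H : ℂ → Fin n × Fin 2 → ℂ)
    (hHcont : ∀ p, ContinuousOn (fun ζ => H ζ p) (Metric.closedBall 0 1))
    (hHdiff : ∀ p, DifferentiableOn ℂ (fun ζ => H ζ p) (Metric.ball 0 1))
    (hHreg : ∀ p, ContDiffOn ℂ K (fun ζ => H ζ p) (Metric.closedBall 0 1))
    (hcirc : ∀ ζ : ℂ, ‖ζ‖ = 1 →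
      ((Gtilde2 n Q S ζ).map (starRingEnd ℂ)).mulVec (H ζ) +
        (Gtilde2 n Q S ζ).mulVec (fun q => conj (H ζ q)) = 0)
    (hjet : ∀ p, ∀ j ≤ K,
      iteratedDerivWithin j (fun ζ => H ζ p) (Metric.closedBall 0 1) 1 = 0) :
    ∀ ζ ∈ Metric.closedBall (0 : ℂ) 1, H ζ = 0 := by
  haveI : NeZero n := ⟨by omega⟩
  -- boundary points lie in the closed ball
  have hbd : ∀ ζ : ℂ, ‖ζ‖ = 1 → ζ ∈ Metric.closedBall (0:ℂ) 1 := by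
    intro ζ hζ; rw [Metric.mem_closedBall, dist_zero_right, hζ]
  -- the conjugated matrix is invertible on the circle
  have hdet : ∀ ζ : ℂ, ‖ζ‖ = 1 → IsUnit ((Gtilde2 n Q S ζ).map (starRingEnd ℂ)).det := by
    intro ζ hζ
    have hζ0 : ζ ≠ 0 := by intro h; rw [h] at hζ; simp at hζ
    by_contra hnot
    have hinv0 : ((Gtilde2 n Q S ζ).map (starRingEnd ℂ))⁻¹ = 0 :=
      Matrix.nonsing_inv_apply_not_isUnit _ hnot
    have h0 := hfact ζ hζ
    rw [hinv0, mul_zero, zero_mul, neg_zero] at h0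
    have hdet0 := congrArg Matrix.det h0
    rw [Matrix.det_zero, Matrix.det_mul, Matrix.det_diagonal] at hdet0
    have hD : (∏ p, ζ ^ κ p) ≠ 0 := Finset.prod_ne_zero_iff.mpr fun p _ => zpow_ne_zero _ hζ0
    have hT : ((Θ ζ).map (starRingEnd ℂ)).det ≠ 0 := by
      rw [show (Θ ζ).map ⇑(starRingEnd ℂ) = (starRingEnd ℂ).mapMatrix (Θ ζ) from rfl,
        ← RingHom.map_det]
      have : (Θ ζ).det ≠ 0 :=
        ((Matrix.isUnit_iff_isUnit_det _).mp (hΘinv ζ (hbd ζ hζ))).ne_zero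
      simpa using this
    exact (mul_ne_zero hD hT) hdet0.symm
  -- the scalar relation on the circle for f := Θ · H
  have hrel : ∀ ζ : ℂ, ‖ζ‖ = 1 → ∀ p,
      (Θ ζ).mulVec (H ζ) p = ζ ^ κ p * conj ((Θ ζ).mulVec (H ζ) p) := by
    intro ζ hζ p
    set A := Gtilde2 n Q S ζ with hA
    set Ac := A.map (starRingEnd ℂ) with hAc
    have hAcinv : Ac⁻¹ * Ac = 1 := Matrix.nonsing_inv_mul _ (hdet ζ hζ)
    have heq : Ac.mulVec (H ζ) = -(A.mulVec (fun q => conj (H ζ q))) :=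
      eq_neg_of_add_eq_zero_left (hcirc ζ hζ)
    have hchain : (Θ ζ).mulVec (H ζ)
        = (Matrix.diagonal (fun p => ζ ^ κ p)).mulVec
            (((Θ ζ).map (starRingEnd ℂ)).mulVec (fun q => conj (H ζ q))) := by
      calc (Θ ζ).mulVec (H ζ)
          = ((Θ ζ * Ac⁻¹) * Ac).mulVec (H ζ) := by
            rw [mul_assoc, hAcinv, mul_one]
        _ = (Θ ζ * Ac⁻¹).mulVec (Ac.mulVec (H ζ)) := by rw [Matrix.mulVec_mulVec]
        _ = (Θ ζ * Ac⁻¹).mulVec (-(A.mulVec (fun q => conj (H ζ q)))) := by rw [heq]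
        _ = -((Θ ζ * Ac⁻¹).mulVec (A.mulVec (fun q => conj (H ζ q)))) := by
            rw [Matrix.mulVec_neg]
        _ = -((Θ ζ * Ac⁻¹ * A).mulVec (fun q => conj (H ζ q))) := by
            rw [Matrix.mulVec_mulVec]
        _ = (-(Θ ζ * Ac⁻¹ * A)).mulVec (fun q => conj (H ζ q)) := by
            rw [Matrix.neg_mulVec]
        _ = (Matrix.diagonal (fun p => ζ ^ κ p) * (Θ ζ).map (starRingEnd ℂ)).mulVec
              (fun q => conj (H ζ q)) := by rw [hfact ζ hζ]
        _ = (Matrix.diagonal (fun p => ζ ^ κ p)).mulVec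
              (((Θ ζ).map (starRingEnd ℂ)).mulVec (fun q => conj (H ζ q))) := by
            rw [Matrix.mulVec_mulVec]
    have hconjmv : ((Θ ζ).map (starRingEnd ℂ)).mulVec (fun q => conj (H ζ q)) p
        = conj ((Θ ζ).mulVec (H ζ) p) := by
      simp [Matrix.mulVec, dotProduct, Matrix.map_apply, map_sum]
    conv_lhs => rw [hchain]
    rw [Matrix.mulVec_diagonal, hconjmv]
  -- boundedness of Θ entries
  choose C hC using fun p q : Fin n × Fin 2 =>
    (isCompact_closedBall (0:ℂ) 1).exists_bound_of_continuousOn (hΘcont p q)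
  -- componentwise vanishing of Θ·H
  have hgzero : ∀ p, ∀ ζ ∈ Metric.closedBall (0:ℂ) 1, (Θ ζ).mulVec (H ζ) p = 0 := by
    intro p
    set g : ℂ → ℂ := fun ζ => ∑ q, Θ ζ p q * H ζ q with hg
    have hgf : ∀ ζ, (Θ ζ).mulVec (H ζ) p = g ζ := fun ζ => by
      simp [hg, Matrix.mulVec, dotProduct]
    have hgc : ContinuousOn g (Metric.closedBall 0 1) := by
      apply continuousOn_finset_sum
      intro q _
      exact (hΘcont p q).mul (hHcont q)
    have hgd : DifferentiableOn ℂ g (Metric.ball 0 1) := by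
      apply DifferentiableOn.fun_sum
      intro q _
      exact (hΘdiff p q).mul (hHdiff q)
    have hH1 : ∀ q, H 1 q = 0 := by
      intro q
      have := hjet q 0 (Nat.zero_le _)
      simpa [iteratedDerivWithin_zero] using this
    have hg1 : g 1 = 0 := by simp [hg, hH1]
    have hκK : κ p ≤ (K:ℤ) := hK.2 ⟨p, rfl⟩
    have hgrel : ∀ ζ : ℂ, ‖ζ‖ = 1 → g ζ = ζ ^ κ p * conj (g ζ) := by
      intro ζ hζ
      rw [← hgf ζ]
      exact hrel ζ hζ p
    have hlo : ∀ ε > (0:ℝ), ∃ δ > (0:ℝ), ∀ ζ ∈ Metric.closedBall (0:ℂ) 1,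
        ‖ζ - 1‖ < δ → ‖g ζ‖ ≤ ε * ‖ζ - 1‖ ^ K := by
      intro ε hε
      set B : ℝ := ∑ q : Fin n × Fin 2, (max (C p q) 0 + 1) with hB
      have hBpos : 0 < B := Finset.sum_pos (fun q _ => by positivity) Finset.univ_nonempty
      have hε' : 0 < ε / B := div_pos hε hBpos
      have hδq := fun q => jet_littleo K (fun ζ => H ζ q) (hHreg q) (hjet q) (ε/B) hε'
      choose δq hδqpos hδq' using hδq
      refine ⟨Finset.univ.inf' Finset.univ_nonempty δq,
        (Finset.lt_inf'_iff _).mpr (fun q _ => hδqpos q), fun ζ hζ hlt => ?_⟩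
      have hbound : ∀ q, ‖H ζ q‖ ≤ (ε/B) * ‖ζ-1‖^K := fun q =>
        hδq' q ζ hζ (lt_of_lt_of_le hlt (Finset.inf'_le _ (Finset.mem_univ q)))
      calc ‖g ζ‖ ≤ ∑ q, ‖Θ ζ p q * H ζ q‖ := norm_sum_le _ _
        _ ≤ ∑ q, (max (C p q) 0 + 1) * ((ε/B) * ‖ζ-1‖^K) := by
            apply Finset.sum_le_sum
            intro q _
            rw [norm_mul]
            apply mul_le_mul ?_ (hbound q) (norm_nonneg _) (by positivity)
            calc ‖Θ ζ p q‖ ≤ C p q := hC p q ζ hζ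
              _ ≤ max (C p q) 0 + 1 := by
                  have := le_max_left (C p q) (0:ℝ); linarith
        _ = B * ((ε/B) * ‖ζ-1‖^K) := by rw [← Finset.sum_mul]
        _ = ε * ‖ζ-1‖^K := by field_simp
    have hvan := key_vanish K (κ p) hκK g hgc hgd hg1 hgrel hlo
    intro ζ hζ
    rw [hgf ζ]
    exact hvan ζ hζ
  -- conclude H = 0
  intro ζ hζ
  have hmv : (Θ ζ).mulVec (H ζ) = 0 := funext fun p => hgzero p ζ hζ
  have hdetT : IsUnit (Θ ζ).det := (Matrix.isUnit_iff_isUnit_det _).mp (hΘinv ζ hζ)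
  have hfin : H ζ = (Θ ζ)⁻¹.mulVec ((Θ ζ).mulVec (H ζ)) := by
    rw [Matrix.mulVec_mulVec, Matrix.nonsing_inv_mul _ hdetT, Matrix.one_mulVec]
  rw [hmv, Matrix.mulVec_zero] at hfin
  exact hfin

end
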